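/- arXiv:1603.04893 — 8 statements merged into one kernel-verified Lean document; each statement's English description precedes it below -/
import Mathlib

section
/- If γ is additionally nondecreasing in the setting of the previous theorem, then any group Nash equilibrium S satisfies γ(S) ≥ (1/2)γ(Ω), where Ω is the optimal group action sequence. -/
open Finset

/-- Vetta's 1/2 bound, pure-strategy group version: for a valid utility system
`(γ, {η i})` with `γ` submodular, if `γ` is additionally nondecreasing, any group Nash equilibrium `S` satisfies `γ(S) ≥ (1/2) γ(Ω)`. -/
theorem group_nash_half_value {V : Type*} [DecidableEq V]
    (γ : Finset V → ℝ)
    (hsub : ∀ A B : Finset V, γ (A ∪ B) + γ (A ∩ B) ≤ γ A + γ B)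
    (l : ℕ) (𝒳 : Fin l → Set (Finset V))
    -- the groups' action spaces come from disjoint ground sets
    (hdisj : ∀ i j : Fin l, i ≠ j → ∀ x ∈ 𝒳 i, ∀ y ∈ 𝒳 j, Disjoint x y)
    (η : Fin l → (Fin l → Finset V) → ℝ)
    -- validity (i): each group's utility is at least its marginal contribution
    (hvalid1 : ∀ t : Fin l → Finset V, (∀ i, t i ∈ 𝒳 i) → ∀ i : Fin l,
      γ (Finset.univ.biUnion t) - γ (Finset.univ.biUnion t \ t i) ≤ η i t)
    -- validity (ii): the group utilities sum to at most the social utility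
    (hvalid2 : ∀ t : Fin l → Finset V, (∀ i, t i ∈ 𝒳 i) →
      ∑ i : Fin l, η i t ≤ γ (Finset.univ.biUnion t))
    (s σ : Fin l → Finset V)
    (hs : ∀ i, s i ∈ 𝒳 i) (hσ : ∀ i, σ i ∈ 𝒳 i)
    -- Ω = ∪ σ i is an optimal (feasible) group action sequence
    (hopt : ∀ t : Fin l → Finset V, (∀ i, t i ∈ 𝒳 i) →
      γ (Finset.univ.biUnion t) ≤ γ (Finset.univ.biUnion σ))
    -- s is a group Nash equilibrium: no group gains by unilateral deviation
    (hnash : ∀ (i : Fin l), ∀ t' ∈ 𝒳 i, η i (Function.update s i t') ≤ η i s)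
    -- γ is additionally nondecreasing (with γ ∅ ≥ 0)
    (hmono : ∀ A B : Finset V, A ⊆ B → γ A ≤ γ B)
    (h0 : 0 ≤ γ ∅) :
    (1 / 2) * γ (Finset.univ.biUnion σ) ≤ γ (Finset.univ.biUnion s) := by
  classical
  set S := Finset.univ.biUnion s with hSdef
  -- Step 1: marginal bound via Nash + validity (i)
  have key : ∀ i : Fin l, γ (S ∪ σ i) - γ S ≤ η i s := by
    intro i
    set t := Function.update s i (σ i) with ht
    have htmem : ∀ j, t j ∈ 𝒳 j := by
      intro j
      by_cases h : j = i
      · subst h; simp [ht, hσ]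
      · simp [ht, Function.update_of_ne h, hs]
    have hti : t i = σ i := Function.update_self _ _ _
    have hne : ∀ j : Fin l, j ≠ i → ∀ x, x ∈ s j → x ∉ s i :=
      fun j hj x hx => Finset.disjoint_left.mp (hdisj j i hj _ (hs j) _ (hs i)) hx
    have hneσ : ∀ j : Fin l, j ≠ i → ∀ x, x ∈ s j → x ∉ σ i :=
      fun j hj x hx => Finset.disjoint_left.mp (hdisj j i hj _ (hs j) _ (hσ i)) hx
    have hU : Finset.univ.biUnion t = (S \ s i) ∪ σ i := by
      ext x
      simp only [Finset.mem_biUnion, Finset.mem_union, Finset.mem_sdiff, Finset.mem_univ,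
        true_and, hSdef]
      constructor
      · rintro ⟨j, hj⟩
        by_cases h : j = i
        · subst h; right; rwa [hti] at hj
        · rw [ht, Function.update_of_ne h] at hj
          exact Or.inl ⟨⟨j, hj⟩, hne j h x hj⟩
      · rintro (⟨⟨j, hj⟩, hxi⟩ | hx)
        · have hji : j ≠ i := by rintro rfl; exact hxi hj
          exact ⟨j, by rw [ht, Function.update_of_ne hji]; exact hj⟩
        · exact ⟨i, by rw [hti]; exact hx⟩
    have hdisj2 : Disjoint (S \ s i) (σ i) := by
      rw [Finset.disjoint_left]
      intro x hx hxσ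
      obtain ⟨hxS, hxsi⟩ := Finset.mem_sdiff.mp hx
      obtain ⟨j, -, hj⟩ := Finset.mem_biUnion.mp hxS
      by_cases h : j = i
      · exact hxsi (h ▸ hj)
      · exact hneσ j h x hj hxσ
    have hUdiff : Finset.univ.biUnion t \ t i = S \ s i := by
      rw [hti, hU, Finset.union_sdiff_right, Finset.sdiff_eq_self_iff_disjoint.mpr hdisj2]
    have h1 := hvalid1 t htmem i
    rw [hUdiff, hU] at h1
    have h2 : η i t ≤ η i s := hnash i (σ i) (hσ i)
    have h3 := hsub S ((S \ s i) ∪ σ i)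
    have hcup : S ∪ ((S \ s i) ∪ σ i) = S ∪ σ i := by
      rw [← Finset.union_assoc, Finset.union_eq_left.mpr (Finset.sdiff_subset)]
    have hcap : S \ s i ⊆ S ∩ ((S \ s i) ∪ σ i) := fun x hx =>
      Finset.mem_inter.mpr ⟨(Finset.mem_sdiff.mp hx).1, Finset.mem_union_left _ hx⟩
    have h4 := hmono _ _ hcap
    rw [hcup] at h3
    linarith
  -- Step 2: telescoping via submodularity
  have tele : ∀ T : Finset (Fin l),
      γ (S ∪ T.biUnion σ) ≤ γ S + ∑ i ∈ T, (γ (S ∪ σ i) - γ S) := by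
    intro T
    induction T using Finset.induction_on with
    | empty => simp
    | insert a T ha ih =>
      have h3 := hsub (S ∪ T.biUnion σ) (S ∪ σ a)
      have hcup : (S ∪ T.biUnion σ) ∪ (S ∪ σ a) = S ∪ (insert a T).biUnion σ := by
        rw [Finset.biUnion_insert]
        ext x; simp only [Finset.mem_union]; tauto
      have hcap : S ⊆ (S ∪ T.biUnion σ) ∩ (S ∪ σ a) := fun x hx =>
        Finset.mem_inter.mpr ⟨Finset.mem_union_left _ hx, Finset.mem_union_left _ hx⟩
      have h4 := hmono _ _ hcap
      rw [hcup] at h3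
      rw [Finset.sum_insert ha]
      linarith
  have htel := tele Finset.univ
  have hmono2 : γ (Finset.univ.biUnion σ) ≤ γ (S ∪ Finset.univ.biUnion σ) :=
    hmono _ _ (Finset.subset_union_right)
  have hsum : ∑ i : Fin l, (γ (S ∪ σ i) - γ S) ≤ ∑ i : Fin l, η i s :=
    Finset.sum_le_sum fun i _ => key i
  have h2 := hvalid2 s hs
  linarith
end

section
/- (Curvature-based bound for group Nash equilibria.) For a valid utility system (γ, {η_i}_{i=1}^l) with γ nondecreasing, submodular, and γ(∅) = 0, any group Nash equilibrium S satisfies γ(S) ≥ γ(Ω)/(1 + max_{1≤i≤l} c_{k_i}), where c_{k_i} = max over feasible group actions with γ(s^i) ≠ 0 of (1 - [γ(Ω ∪ S) - γ(Ω ∪ (S∖s^i))]/γ(s^i)). -/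
open Finset

open Finset

section helpers
variable {V : Type*} [DecidableEq V] {γ : Finset V → ℝ}

lemma gnc_marg (hsub : ∀ A B : Finset V, γ (A ∪ B) + γ (A ∩ B) ≤ γ A + γ B)
    (hmono : ∀ A B : Finset V, A ⊆ B → γ A ≤ γ B)
    {X Y : Finset V} (A : Finset V) (hXY : X ⊆ Y) :
    γ (Y ∪ A) - γ Y ≤ γ (X ∪ A) - γ X := by
  have h1 : Y ∪ (X ∪ A) = Y ∪ A := by
    rw [← union_assoc, union_eq_left.mpr hXY]
  have h3 := hsub Y (X ∪ A)
  have h4 := hmono X (Y ∩ (X ∪ A)) (subset_inter hXY subset_union_left)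
  rw [h1] at h3
  linarith

lemma gnc_tele {l : ℕ} (f : Fin l → Finset V) (B : Finset V) :
    ∃ P : Fin l → Finset V,
      (∀ i, B ⊆ P i) ∧
      (∀ i j : Fin l, j < i → f j ⊆ P i) ∧
      (∀ (i : Fin l) (Z : Finset V), B ⊆ Z → (∀ j : Fin l, j < i → f j ⊆ Z) → P i ⊆ Z) ∧
      (∑ i : Fin l, (γ (P i ∪ f i) - γ (P i))) = γ (B ∪ univ.biUnion f) - γ B := by
  classical
  set d : ℕ → Finset V := fun j => if h : j < l then f ⟨j, h⟩ else ∅ with hd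
  set g : ℕ → Finset V := fun n => B ∪ (range n).biUnion d with hg
  have hstep : ∀ i : Fin l, g (i.val + 1) = g i.val ∪ f i := by
    intro i
    have : d i.val = f i := by simp [hd, i.isLt]
    simp only [hg, range_add_one, biUnion_insert, this]
    ac_rfl
  refine ⟨fun i => g i.val, fun i => subset_union_left, ?_, ?_, ?_⟩
  · intro i j hji x hx
    simp only [hg, mem_union, mem_biUnion, mem_range]
    right
    exact ⟨j.val, hji, by simp [hd, j.isLt, hx]⟩
  · intro i Z hB hZ
    refine union_subset hB (biUnion_subset.2 ?_)
    intro n hn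
    rw [mem_range] at hn
    have hnl : n < l := lt_trans hn i.isLt
    have : d n = f ⟨n, hnl⟩ := by simp [hd, hnl]
    rw [this]
    exact hZ ⟨n, hnl⟩ hn
  · have hsum : (∑ i : Fin l, (γ (g (i.val + 1)) - γ (g i.val)))
        = γ (g l) - γ (g 0) := by
      rw [Fin.sum_univ_eq_sum_range (fun j => γ (g (j + 1)) - γ (g j))]
      exact Finset.sum_range_sub (fun n => γ (g n)) l
    have hg0 : g 0 = B := by simp [hg]
    have hgl : g l = B ∪ univ.biUnion f := by
      simp only [hg]
      congr 1
      ext a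
      simp only [mem_biUnion, mem_range, mem_univ, true_and]
      constructor
      · rintro ⟨j, hj, ha⟩
        rw [hd] at ha
        simp only [hj, dif_pos] at ha
        exact ⟨⟨j, hj⟩, ha⟩
      · rintro ⟨i, ha⟩
        exact ⟨i.val, i.isLt, by simp [hd, i.isLt, ha]⟩
    calc (∑ i : Fin l, (γ (g i.val ∪ f i) - γ (g i.val)))
        = ∑ i : Fin l, (γ (g (i.val + 1)) - γ (g i.val)) := by
          refine Finset.sum_congr rfl fun i _ => by rw [hstep]
      _ = γ (B ∪ univ.biUnion f) - γ B := by rw [hsum, hg0, hgl]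

lemma gnc_subadd (hsub : ∀ A B : Finset V, γ (A ∪ B) + γ (A ∩ B) ≤ γ A + γ B)
    (hmono : ∀ A B : Finset V, A ⊆ B → γ A ≤ γ B) (h0 : γ ∅ = 0)
    {l : ℕ} (s : Fin l → Finset V) :
    γ (univ.biUnion s) ≤ ∑ i : Fin l, γ (s i) := by
  classical
  have hnn : ∀ A : Finset V, 0 ≤ γ A := fun A => h0 ▸ hmono ∅ A (empty_subset A)
  have key : ∀ T : Finset (Fin l), γ (T.biUnion s) ≤ ∑ i ∈ T, γ (s i) := by
    intro T
    induction T using Finset.induction_on with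
    | empty => simp [h0]
    | insert a T hnotmem ih =>
      rw [biUnion_insert, sum_insert hnotmem]
      have := hsub (s a) (T.biUnion s)
      have := hnn (s a ∩ T.biUnion s)
      linarith
  exact key univ

end helpers
/-- Vetta's 1/2 bound, pure-strategy group version: for a valid utility system
`(γ, {η i})` with `γ` submodular, curvature-based bound: with `γ` nondecreasing, submodular and `γ ∅ = 0`,
any group Nash equilibrium `S` satisfies `γ(S) ≥ γ(Ω) / (1 + max_i c_{k_i})`,
where `c_{k_i}` is the group curvature of group `i`. -/
theorem group_nash_curvature_bound {V : Type*} [DecidableEq V]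
    (γ : Finset V → ℝ)
    (hsub : ∀ A B : Finset V, γ (A ∪ B) + γ (A ∩ B) ≤ γ A + γ B)
    (l : ℕ) (𝒳 : Fin l → Set (Finset V))
    -- the groups' action spaces come from disjoint ground sets
    (hdisj : ∀ i j : Fin l, i ≠ j → ∀ x ∈ 𝒳 i, ∀ y ∈ 𝒳 j, Disjoint x y)
    (η : Fin l → (Fin l → Finset V) → ℝ)
    -- validity (i): each group's utility is at least its marginal contribution
    (hvalid1 : ∀ t : Fin l → Finset V, (∀ i, t i ∈ 𝒳 i) → ∀ i : Fin l,
      γ (Finset.univ.biUnion t) - γ (Finset.univ.biUnion t \ t i) ≤ η i t)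
    -- validity (ii): the group utilities sum to at most the social utility
    (hvalid2 : ∀ t : Fin l → Finset V, (∀ i, t i ∈ 𝒳 i) →
      ∑ i : Fin l, η i t ≤ γ (Finset.univ.biUnion t))
    (s σ : Fin l → Finset V)
    (hs : ∀ i, s i ∈ 𝒳 i) (hσ : ∀ i, σ i ∈ 𝒳 i)
    -- Ω = ∪ σ i is an optimal (feasible) group action sequence
    (hopt : ∀ t : Fin l → Finset V, (∀ i, t i ∈ 𝒳 i) →
      γ (Finset.univ.biUnion t) ≤ γ (Finset.univ.biUnion σ))
    -- s is a group Nash equilibrium: no group gains by unilateral deviation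
    (hnash : ∀ (i : Fin l), ∀ t' ∈ 𝒳 i, η i (Function.update s i t') ≤ η i s)
    -- γ is additionally nondecreasing (with γ ∅ ≥ 0)
    (hmono : ∀ A B : Finset V, A ⊆ B → γ A ≤ γ B)
    (h0 : γ ∅ = 0)
    -- `c i` is the group curvature of group `i`, the max over feasible
    -- configurations `t` with `γ (t i) ≠ 0` of
    -- `1 - (γ (Ω ∪ S t) - γ (Ω ∪ (S t \ t i))) / γ (t i)`
    (c : Fin l → ℝ)
    (hc : ∀ i : Fin l, IsGreatest {r : ℝ | ∃ t : Fin l → Finset V,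
      (∀ j, t j ∈ 𝒳 j) ∧ γ (t i) ≠ 0 ∧
      r = 1 - (γ (Finset.univ.biUnion σ ∪ Finset.univ.biUnion t)
        - γ (Finset.univ.biUnion σ ∪ (Finset.univ.biUnion t \ t i))) / γ (t i)} (c i))
    (cmax : ℝ)
    (hcmax : IsGreatest {r : ℝ | ∃ i : Fin l, r = c i} cmax) :
    γ (Finset.univ.biUnion σ) / (1 + cmax) ≤ γ (Finset.univ.biUnion s) := by
  classical
  have hnn : ∀ A : Finset V, 0 ≤ γ A := fun A => h0 ▸ hmono ∅ A (empty_subset A)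
  set S := Finset.univ.biUnion s with hS
  set Ω := Finset.univ.biUnion σ with hΩ
  have hdss : ∀ i j : Fin l, i ≠ j → Disjoint (s i) (s j) :=
    fun i j hij => hdisj i j hij (s i) (hs i) (s j) (hs j)
  have hdσs : ∀ i j : Fin l, i ≠ j → Disjoint (σ i) (s j) :=
    fun i j hij => hdisj i j hij (σ i) (hσ i) (s j) (hs j)
  have hsubS : ∀ i, s i ⊆ S := fun i => subset_biUnion_of_mem s (mem_univ i)
  have hmemS : ∀ {a : V} {i : Fin l}, a ∈ S \ s i ↔ ∃ j, j ≠ i ∧ a ∈ s j := by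
    intro a i
    rw [hS]
    simp only [mem_sdiff, mem_biUnion, mem_univ, true_and]
    constructor
    · rintro ⟨⟨j, hj⟩, hni⟩
      exact ⟨j, fun h => hni (h ▸ hj), hj⟩
    · rintro ⟨j, hji, hj⟩
      exact ⟨⟨j, hj⟩, fun h => (Finset.disjoint_left.1 (hdss j i hji)) hj h⟩
  -- Step A: Nash equilibrium + validity (i)
  have stepA : ∀ i : Fin l, γ ((S \ s i) ∪ σ i) - γ (S \ s i) ≤ η i s := by
    intro i
    set t := Function.update s i (σ i) with htdef
    have ht : ∀ j, t j ∈ 𝒳 j := by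
      intro j
      rcases eq_or_ne j i with h | h
      · subst h; rw [htdef, Function.update_self]; exact hσ j
      · rw [htdef, Function.update_of_ne h]; exact hs j
    have hT : Finset.univ.biUnion t = (S \ s i) ∪ σ i := by
      ext a
      simp only [mem_biUnion, mem_univ, true_and, mem_union]
      constructor
      · rintro ⟨j, hj⟩
        rcases eq_or_ne j i with h | h
        · subst h; rw [htdef, Function.update_self] at hj; exact Or.inr hj
        · rw [htdef, Function.update_of_ne h] at hj
          exact Or.inl (hmemS.2 ⟨j, h, hj⟩)
      · rintro (h | h)
        · obtain ⟨j, hji, hj⟩ := hmemS.1 h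
          exact ⟨j, by rw [htdef, Function.update_of_ne hji]; exact hj⟩
        · exact ⟨i, by rw [htdef, Function.update_self]; exact h⟩
    have hdisj2 : Disjoint (S \ s i) (σ i) := by
      rw [Finset.disjoint_left]
      intro a ha hai
      obtain ⟨j, hji, hj⟩ := hmemS.1 ha
      exact (Finset.disjoint_left.1 (hdσs i j (Ne.symm hji))) hai hj
    have hT2 : Finset.univ.biUnion t \ t i = S \ s i := by
      rw [hT, htdef, Function.update_self]
      ext a
      simp only [mem_sdiff, mem_union]
      constructor
      · rintro ⟨h | h, hni⟩
        · exact h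
        · exact absurd h hni
      · intro h
        exact ⟨Or.inl h, Finset.disjoint_left.1 hdisj2 (mem_sdiff.2 h)⟩
    have hv1 := hvalid1 t ht i
    rw [hT2, hT] at hv1
    have hn := hnash i (σ i) (hσ i)
    rw [← htdef] at hn
    linarith
  -- Step B: telescoping over σ with base S
  obtain ⟨P, hPB, hPf, hPZ, hPsum⟩ := gnc_tele (γ := γ) σ S
  rw [← hΩ] at hPsum
  have stepB : γ (S ∪ Ω) - γ S ≤ ∑ i : Fin l, (γ ((S \ s i) ∪ σ i) - γ (S \ s i)) := by
    rw [← hPsum]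
    refine Finset.sum_le_sum fun i _ => ?_
    exact gnc_marg hsub hmono (σ i) (sdiff_subset.trans (hPB i))
  -- Step C: telescoping over s with base Ω
  obtain ⟨Q, hQB, hQf, hQZ, hQsum⟩ := gnc_tele (γ := γ) s Ω
  rw [← hS] at hQsum
  have stepC : ∑ i : Fin l, (γ (Ω ∪ S) - γ (Ω ∪ (S \ s i))) ≤ γ (Ω ∪ S) - γ Ω := by
    rw [← hQsum]
    refine Finset.sum_le_sum fun i _ => ?_
    have hQY : Q i ⊆ Ω ∪ (S \ s i) := by
      refine hQZ i _ subset_union_left ?_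
      intro j hji x hx
      exact mem_union_right _ (hmemS.2 ⟨j, ne_of_lt hji, hx⟩)
    have hrw : (Ω ∪ (S \ s i)) ∪ s i = Ω ∪ S := by
      rw [union_assoc, sdiff_union_self_eq_union, union_eq_left.mpr (hsubS i)]
    calc γ (Ω ∪ S) - γ (Ω ∪ (S \ s i))
        = γ ((Ω ∪ (S \ s i)) ∪ s i) - γ (Ω ∪ (S \ s i)) := by rw [hrw]
      _ ≤ γ (Q i ∪ s i) - γ (Q i) := gnc_marg hsub hmono (s i) hQY
  -- bounds on cmax
  obtain ⟨⟨i0, hi0⟩, hub⟩ := hcmax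
  obtain ⟨t0, ht0, ht0ne, hc0eq⟩ := (hc i0).1
  have ht0pos : 0 < γ (t0 i0) := lt_of_le_of_ne (hnn _) (Ne.symm ht0ne)
  have hsubT0 : t0 i0 ⊆ Finset.univ.biUnion t0 := subset_biUnion_of_mem t0 (mem_univ i0)
  have hrwT0 : (Ω ∪ (Finset.univ.biUnion t0 \ t0 i0)) ∪ t0 i0 = Ω ∪ Finset.univ.biUnion t0 := by
    rw [union_assoc, sdiff_union_self_eq_union, union_eq_left.mpr hsubT0]
  have hmarg_ub : γ (Ω ∪ Finset.univ.biUnion t0) - γ (Ω ∪ (Finset.univ.biUnion t0 \ t0 i0))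
      ≤ γ (t0 i0) := by
    have h2 := gnc_marg hsub hmono (t0 i0)
      (empty_subset (Ω ∪ (Finset.univ.biUnion t0 \ t0 i0)))
    rw [hrwT0, empty_union, h0] at h2
    linarith
  have hmarg_lb : 0 ≤ γ (Ω ∪ Finset.univ.biUnion t0) - γ (Ω ∪ (Finset.univ.biUnion t0 \ t0 i0)) := by
    have := hmono _ _ (union_subset_union_right sdiff_subset :
      Ω ∪ (Finset.univ.biUnion t0 \ t0 i0) ⊆ Ω ∪ Finset.univ.biUnion t0)
    linarith
  have hcmax0 : 0 ≤ cmax := by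
    rw [hi0, hc0eq]
    have : (γ (Ω ∪ Finset.univ.biUnion t0) - γ (Ω ∪ (Finset.univ.biUnion t0 \ t0 i0))) / γ (t0 i0) ≤ 1 :=
      (div_le_one ht0pos).2 hmarg_ub
    linarith
  have hcmax1 : cmax ≤ 1 := by
    rw [hi0, hc0eq]
    have : 0 ≤ (γ (Ω ∪ Finset.univ.biUnion t0) - γ (Ω ∪ (Finset.univ.biUnion t0 \ t0 i0))) / γ (t0 i0) :=
      div_nonneg hmarg_lb (le_of_lt ht0pos)
    linarith
  -- Step D: curvature lower bound on the marginals
  have stepD : ∀ i : Fin l, (1 - cmax) * γ (s i) ≤ γ (Ω ∪ S) - γ (Ω ∪ (S \ s i)) := by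
    intro i
    by_cases hzero : γ (s i) = 0
    · rw [hzero, mul_zero]
      have := hmono (Ω ∪ (S \ s i)) (Ω ∪ S) (union_subset_union_right sdiff_subset)
      linarith
    · have hpos : 0 < γ (s i) := lt_of_le_of_ne (hnn _) (Ne.symm hzero)
      have hmem : (1 - (γ (Ω ∪ S) - γ (Ω ∪ (S \ s i))) / γ (s i)) ≤ c i :=
        (hc i).2 ⟨s, hs, hzero, rfl⟩
      have hic : c i ≤ cmax := hub ⟨i, rfl⟩
      have hd : 1 - cmax ≤ (γ (Ω ∪ S) - γ (Ω ∪ (S \ s i))) / γ (s i) := by linarith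
      calc (1 - cmax) * γ (s i)
          ≤ ((γ (Ω ∪ S) - γ (Ω ∪ (S \ s i))) / γ (s i)) * γ (s i) :=
            mul_le_mul_of_nonneg_right hd (le_of_lt hpos)
        _ = γ (Ω ∪ S) - γ (Ω ∪ (S \ s i)) := div_mul_cancel₀ _ hzero
  -- combine everything
  have hsumA : ∑ i : Fin l, (γ ((S \ s i) ∪ σ i) - γ (S \ s i)) ≤ ∑ i : Fin l, η i s :=
    Finset.sum_le_sum fun i _ => stepA i
  have hv2 := hvalid2 s hs
  rw [← hS] at hv2
  have hcomm : S ∪ Ω = Ω ∪ S := union_comm _ _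
  rw [hcomm] at stepB
  have hsub_add := gnc_subadd hsub hmono h0 s
  rw [← hS] at hsub_add
  have hsumD : (1 - cmax) * γ S ≤ ∑ i : Fin l, (γ (Ω ∪ S) - γ (Ω ∪ (S \ s i))) := by
    calc (1 - cmax) * γ S ≤ (1 - cmax) * ∑ i : Fin l, γ (s i) := mul_le_mul_of_nonneg_left hsub_add (by linarith)
      _ = ∑ i : Fin l, (1 - cmax) * γ (s i) := Finset.mul_sum _ _ _
      _ ≤ _ := Finset.sum_le_sum fun i _ => stepD i
  have hfinal : γ Ω ≤ (1 + cmax) * γ S := by linarith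
  have h1c : (0:ℝ) < 1 + cmax := by linarith
  rw [div_le_iff₀ h1c]
  calc γ Ω ≤ (1 + cmax) * γ S := hfinal
    _ = γ S * (1 + cmax) := mul_comm _ _
end

section
/- Let γ be nondecreasing and submodular with γ(∅)=0. For any set T ⊆ V and any s ⊆ V with γ(s) ≠ 0, the quantity 1 - (γ(T ∪ s) - γ(T∖s))/γ(s) is at most the total curvature c = max_{j: γ({j})≠0} (1 - (γ(V) - γ(V∖{j}))/γ({j})); consequently each group curvature c_{k_i} satisfies c_{k_i} ≤ c. -/
open Finset

/-- For `γ` nondecreasing, submodular with `γ ∅ = 0`: for any `T` and any `s`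
with `γ s ≠ 0`, the quantity `1 - (γ (T ∪ s) - γ (T \ s)) / γ s` is at most the
total curvature `c = max_{j : γ {j} ≠ 0} (1 - (γ V - γ (V \ {j})) / γ {j})`;
consequently each group curvature satisfies `c_{k_i} ≤ c`. -/
theorem group_curvature_le_total_curvature {V : Type*} [Fintype V] [DecidableEq V]
    (γ : Finset V → ℝ)
    (hsub : ∀ A B : Finset V, γ (A ∪ B) + γ (A ∩ B) ≤ γ A + γ B)
    (hmono : ∀ A B : Finset V, A ⊆ B → γ A ≤ γ B)
    (h0 : γ ∅ = 0)
    (c : ℝ)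
    (hc : IsGreatest {r : ℝ | ∃ j : V, γ {j} ≠ 0 ∧
      r = 1 - (γ Finset.univ - γ (Finset.univ \ {j})) / γ {j}} c)
    (T s : Finset V) (hs : γ s ≠ 0) :
    1 - (γ (T ∪ s) - γ (T \ s)) / γ s ≤ c := by
  have hnn : ∀ A : Finset V, 0 ≤ γ A := fun A => h0 ▸ hmono ∅ A (empty_subset A)
  have hspos : 0 < γ s := lt_of_le_of_ne (hnn s) (Ne.symm hs)
  -- c ≤ 1
  have hc1 : c ≤ 1 := by
    obtain ⟨j, hj, hcj⟩ := hc.1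
    have hjpos : 0 < γ {j} := lt_of_le_of_ne (hnn _) (Ne.symm hj)
    have hd : 0 ≤ (γ univ - γ (univ \ {j})) / γ {j} :=
      div_nonneg (sub_nonneg.2 (hmono _ _ (sdiff_subset))) hjpos.le
    linarith
  -- marginal bound
  have hmarg : ∀ j : V, (1 - c) * γ {j} ≤ γ univ - γ (univ \ {j}) := by
    intro j
    by_cases hj : γ {j} = 0
    · rw [hj, mul_zero]; exact sub_nonneg.2 (hmono _ _ sdiff_subset)
    · have hjpos : 0 < γ {j} := lt_of_le_of_ne (hnn _) (Ne.symm hj)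
      have h1 : 1 - (γ univ - γ (univ \ {j})) / γ {j} ≤ c := hc.2 ⟨j, hj, rfl⟩
      have h2 : 1 - c ≤ (γ univ - γ (univ \ {j})) / γ {j} := by linarith
      calc (1 - c) * γ {j} ≤ ((γ univ - γ (univ \ {j})) / γ {j}) * γ {j} :=
            mul_le_mul_of_nonneg_right h2 hjpos.le
        _ = γ univ - γ (univ \ {j}) := div_mul_cancel₀ _ hjpos.ne'
  -- telescoping key lemma
  have key : ∀ (u : Finset V), ∀ A : Finset V, Disjoint A u →
      γ A + ∑ j ∈ u, (γ univ - γ (univ \ {j})) ≤ γ (A ∪ u) := by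
    intro u
    induction u using Finset.induction_on with
    | empty => intro A _; simp
    | insert a u' ha ih =>
      intro A hA
      have hA' : Disjoint A u' := hA.mono_right (subset_insert a u')
      have haA : a ∉ A ∪ u' := by
        simp only [mem_union]
        rintro (h | h)
        · exact (hA.forall_ne_finset h (mem_insert_self a u')) rfl
        · exact ha h
      have step : γ univ - γ (univ \ {a}) ≤ γ (insert a (A ∪ u')) - γ (A ∪ u') := by
        have := hsub (insert a (A ∪ u')) (univ \ {a})
        have hu : insert a (A ∪ u') ∪ (univ \ {a}) = univ := by
          apply eq_univ_of_forall
          intro x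
          by_cases hx : x = a <;> simp [hx]
        have hi : insert a (A ∪ u') ∩ (univ \ {a}) = A ∪ u' := by
          ext x
          simp only [mem_inter, mem_insert, mem_sdiff, mem_univ, mem_singleton, true_and]
          constructor
          · rintro ⟨h | h, hne⟩
            · exact absurd h hne
            · exact h
          · intro h
            exact ⟨Or.inr h, fun hxa => haA (hxa ▸ h)⟩
        rw [hu, hi] at this
        linarith
      have heq : A ∪ insert a u' = insert a (A ∪ u') := by
        ext x; simp [or_left_comm]
      rw [heq, Finset.sum_insert ha]
      have := ih A hA'
      linarith
  -- subadditivity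
  have subadd : ∀ u : Finset V, γ u ≤ ∑ j ∈ u, γ {j} := by
    intro u
    induction u using Finset.induction_on with
    | empty => simp [h0]
    | insert a u' ha ih =>
      have := hsub {a} u'
      have hu : ({a} : Finset V) ∪ u' = insert a u' := by ext x; simp
      rw [hu] at this
      rw [Finset.sum_insert ha]
      have := hnn ({a} ∩ u')
      linarith
  -- assemble
  have hds : Disjoint (T \ s) s := sdiff_disjoint
  have hTs : (T \ s) ∪ s = T ∪ s := by
    ext x; by_cases hx : x ∈ s <;> simp [hx]
  have hkey := key s (T \ s) hds
  rw [hTs] at hkey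
  have hsum : (1 - c) * γ s ≤ ∑ j ∈ s, (γ univ - γ (univ \ {j})) := by
    calc (1 - c) * γ s ≤ (1 - c) * ∑ j ∈ s, γ {j} :=
          mul_le_mul_of_nonneg_left (subadd s) (by linarith)
      _ = ∑ j ∈ s, (1 - c) * γ {j} := Finset.mul_sum _ _ _
      _ ≤ ∑ j ∈ s, (γ univ - γ (univ \ {j})) := Finset.sum_le_sum fun j _ => hmarg j
  have hfin : (1 - c) * γ s ≤ γ (T ∪ s) - γ (T \ s) := by linarith
  have : 1 - c ≤ (γ (T ∪ s) - γ (T \ s)) / γ s := (le_div_iff₀ hspos).2 (by linarith)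
  linarith
end

section
/- In the database-assisted spectrum access game, the social utility γ(A) = -Σ_{i=1}^N [Σ_{m ∈ N_i^p} P_m d_{mi}^{-λ} 1{a_i = a_m} + ω_{a_i}^i] satisfies, for every user i, α_i(A) ≥ γ(A) - γ(A_{-i}), where A_{-i} is the assignment with user i removed; i.e., Assumption 1 (marginal-contribution validity) holds. -/
open Finset

/-- Interference experienced by user `i` from the active users in `T`
(in the database-assisted spectrum access game). -/
noncomputable def interference (N : ℕ) (P : Fin N → ℝ) (d : Fin N → Fin N → ℝ)
    (lam : ℝ) (Np : Fin N → Finset (Fin N)) (a : Fin N → ℕ)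
    (T : Finset (Fin N)) (i : Fin N) : ℝ :=
  ∑ m ∈ Np i ∩ T, P m * d m i ^ (-lam) * (if a i = a m then 1 else 0)

/-- Private utility of user `i` when the set of active users is `T`. -/
noncomputable def privateUtility (N : ℕ) (P : Fin N → ℝ) (d : Fin N → Fin N → ℝ)
    (lam : ℝ) (Np : Fin N → Finset (Fin N)) (ω : Fin N → ℕ → ℝ) (a : Fin N → ℕ)
    (T : Finset (Fin N)) (i : Fin N) : ℝ :=
  -(interference N P d lam Np a T i) - ω i (a i)

/-- Social utility when the set of active users is `T`: the sum of the private
utilities of active users, with all terms involving inactive users removed. -/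
noncomputable def socialUtility (N : ℕ) (P : Fin N → ℝ) (d : Fin N → Fin N → ℝ)
    (lam : ℝ) (Np : Fin N → Finset (Fin N)) (ω : Fin N → ℕ → ℝ) (a : Fin N → ℕ)
    (T : Finset (Fin N)) : ℝ :=
  ∑ i ∈ T, privateUtility N P d lam Np ω a T i

/-- Assumption 1 (marginal-contribution validity) for the spectrum access game:
for every user `i`, `α i A ≥ γ A - γ (A_{-i})`, where `A_{-i}` removes user `i`. -/
theorem spectrum_assumption1 (N : ℕ) (P : Fin N → ℝ) (d : Fin N → Fin N → ℝ)
    (lam : ℝ) (Np : Fin N → Finset (Fin N)) (ω : Fin N → ℕ → ℝ) (a : Fin N → ℕ)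
    (hP : ∀ m, 0 < P m) (hd : ∀ m i, 0 < d m i) (hlam : 0 < lam)
    (hω : ∀ i c, 0 ≤ ω i c) (hNp : ∀ i, i ∉ Np i) :
    ∀ i : Fin N,
      socialUtility N P d lam Np ω a Finset.univ
        - socialUtility N P d lam Np ω a (Finset.univ \ {i})
      ≤ privateUtility N P d lam Np ω a Finset.univ i := by
  intro i
  have hsplit : socialUtility N P d lam Np ω a Finset.univ
      = privateUtility N P d lam Np ω a Finset.univ i
        + ∑ j ∈ Finset.univ \ {i}, privateUtility N P d lam Np ω a Finset.univ j := by
    rw [socialUtility, Finset.sum_eq_sum_sdiff_singleton_add (Finset.mem_univ i)]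
    ring
  rw [hsplit, socialUtility]
  have hle : ∀ j ∈ Finset.univ \ ({i} : Finset (Fin N)),
      privateUtility N P d lam Np ω a Finset.univ j
        ≤ privateUtility N P d lam Np ω a (Finset.univ \ {i}) j := by
    intro j _
    unfold privateUtility interference
    have hsum : ∑ m ∈ Np j ∩ (Finset.univ \ {i}), P m * d m j ^ (-lam) * (if a j = a m then 1 else 0)
        ≤ ∑ m ∈ Np j ∩ Finset.univ, P m * d m j ^ (-lam) * (if a j = a m then 1 else 0) := by
      apply Finset.sum_le_sum_of_subset_of_nonneg
      · exact Finset.inter_subset_inter le_rfl (Finset.sdiff_subset)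
      · intro m _ _
        have h1 : (0:ℝ) ≤ (if a j = a m then 1 else 0) := by split <;> norm_num
        have h2 : (0:ℝ) < d m j ^ (-lam) := Real.rpow_pos_of_pos (hd m j) _
        exact mul_nonneg (mul_nonneg (hP m).le h2.le) h1
    linarith
  have := Finset.sum_le_sum hle
  linarith
end

section
/- In the database-assisted spectrum access game, the social utility function γ is submodular as a function of sequences of user-channel assignments: for any partial assignments A_k ⊆ A_l (assignments to the first k ≤ l users) and any additional assignment a_j of user j > l, the marginal decrease satisfies γ(A_k ⊕ a_j) - γ(A_k) ≥ γ(A_l ⊕ a_j) - γ(A_l). -/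
open Finset

lemma marginal_eq (N : ℕ) (P : Fin N → ℝ) (d : Fin N → Fin N → ℝ)
    (lam : ℝ) (Np : Fin N → Finset (Fin N)) (ω : Fin N → ℕ → ℝ) (a : Fin N → ℕ)
    (j : Fin N) (hjNp : j ∉ Np j) (T : Finset (Fin N)) (hjT : j ∉ T) :
    socialUtility N P d lam Np ω a (T ∪ {j}) - socialUtility N P d lam Np ω a T =
      -(ω j (a j)) - interference N P d lam Np a T j
        - ∑ i ∈ T, (if j ∈ Np i then P j * d j i ^ (-lam) * (if a i = a j then 1 else 0) else 0) := by
  have hins : T ∪ {j} = insert j T := by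
    ext x; simp [or_comm]
  rw [hins]
  have hIj : interference N P d lam Np a (insert j T) j =
      interference N P d lam Np a T j := by
    unfold interference
    rw [Finset.inter_insert_of_notMem hjNp]
  have hIi : ∀ i ∈ T, interference N P d lam Np a (insert j T) i =
      interference N P d lam Np a T i
        + (if j ∈ Np i then P j * d j i ^ (-lam) * (if a i = a j then 1 else 0) else 0) := by
    intro i _
    unfold interference
    by_cases h : j ∈ Np i
    · rw [Finset.inter_insert_of_mem h, Finset.sum_insert (by simp [hjT]), if_pos h]
      ring
    · rw [Finset.inter_insert_of_notMem h, if_neg h]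
      ring
  unfold socialUtility
  rw [Finset.sum_insert hjT]
  unfold privateUtility
  rw [hIj]
  rw [Finset.sum_congr rfl (fun i hi => by rw [hIi i hi])]
  simp only [neg_add, sub_eq_add_neg, Finset.sum_add_distrib, Finset.sum_neg_distrib]
  ring

/-- Submodularity of the social utility in the spectrum access game, over
sequences of user-channel assignments: for partial assignments to the first
`k ≤ l` users and any further user `j` (with `l ≤ j`), the marginal decrease
when user `j` joins is larger (the marginal value smaller) for the longer
assignment. -/
theorem spectrum_social_submodular (N : ℕ) (P : Fin N → ℝ) (d : Fin N → Fin N → ℝ)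
    (lam : ℝ) (Np : Fin N → Finset (Fin N)) (ω : Fin N → ℕ → ℝ) (a : Fin N → ℕ)
    (hP : ∀ m, 0 < P m) (hd : ∀ m i, 0 < d m i) (hlam : 0 < lam)
    (hω : ∀ i c, 0 ≤ ω i c) (hNp : ∀ i, i ∉ Np i)
    (k l : ℕ) (hkl : k ≤ l) (j : Fin N) (hj : l ≤ (j : ℕ)) :
    socialUtility N P d lam Np ω a
        ((Finset.univ.filter (fun i : Fin N => (i : ℕ) < l)) ∪ {j})
      - socialUtility N P d lam Np ω a
        (Finset.univ.filter (fun i : Fin N => (i : ℕ) < l))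
    ≤ socialUtility N P d lam Np ω a
        ((Finset.univ.filter (fun i : Fin N => (i : ℕ) < k)) ∪ {j})
      - socialUtility N P d lam Np ω a
        (Finset.univ.filter (fun i : Fin N => (i : ℕ) < k)) := by
  set Sk := Finset.univ.filter (fun i : Fin N => (i : ℕ) < k) with hSk
  set Sl := Finset.univ.filter (fun i : Fin N => (i : ℕ) < l) with hSl
  have hjSl : j ∉ Sl := by simp only [hSl, Finset.mem_filter]; omega
  have hjSk : j ∉ Sk := by simp only [hSk, Finset.mem_filter]; omega
  have hsub : Sk ⊆ Sl := by
    intro x hx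
    simp only [hSk, hSl, Finset.mem_filter] at hx ⊢
    exact ⟨hx.1, lt_of_lt_of_le hx.2 hkl⟩
  rw [marginal_eq N P d lam Np ω a j (hNp j) Sl hjSl,
      marginal_eq N P d lam Np ω a j (hNp j) Sk hjSk]
  have hc : ∀ m i : Fin N, 0 ≤ P m * d m i ^ (-lam) * (if a i = a m then 1 else 0) :=
    fun m i => mul_nonneg (mul_nonneg (hP m).le (Real.rpow_nonneg (hd m i).le _))
      (by split <;> norm_num)
  have h1 : interference N P d lam Np a Sk j ≤ interference N P d lam Np a Sl j :=
    Finset.sum_le_sum_of_subset_of_nonneg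
      (Finset.inter_subset_inter (Finset.Subset.refl _) hsub)
      (fun m _ _ => hc m j)
  have h2 : ∑ i ∈ Sk, (if j ∈ Np i then P j * d j i ^ (-lam) * (if a i = a j then 1 else 0) else 0)
      ≤ ∑ i ∈ Sl, (if j ∈ Np i then P j * d j i ^ (-lam) * (if a i = a j then 1 else 0) else 0) :=
    Finset.sum_le_sum_of_subset_of_nonneg hsub
      (fun i _ _ => by
        have hb : (0:ℝ) ≤ P j * d j i ^ (-lam) :=
          mul_nonneg (hP j).le (Real.rpow_nonneg (hd j i).le _)
        split_ifs
        exacts [mul_nonneg hb zero_le_one, mul_nonneg hb le_rfl, le_rfl])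
  linarith
end

section
/- In the spectrum access game with group partitioning, the group utility η_i(A) = Σ_{j ∈ G_i} α_j(A) satisfies η_i(A) ≥ γ(A) - γ(A^{-i}) for every group i and every assignment A, where A^{-i} removes all users in group i; moreover Σ_{i=1}^l η_i(A) = γ(A). Hence the system (γ, {η_i}) is a valid utility system. -/
open Finset

lemma interference_mono (N : ℕ) (P : Fin N → ℝ) (d : Fin N → Fin N → ℝ)
    (lam : ℝ) (Np : Fin N → Finset (Fin N)) (a : Fin N → ℕ)
    (hP : ∀ m, 0 < P m) (hd : ∀ m i, 0 < d m i)
    {S T : Finset (Fin N)} (hST : S ⊆ T) (i : Fin N) :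
    interference N P d lam Np a S i ≤ interference N P d lam Np a T i := by
  apply Finset.sum_le_sum_of_subset_of_nonneg
  · exact Finset.inter_subset_inter Finset.Subset.rfl hST
  · intro m _ _
    have h1 : (0:ℝ) ≤ d m i ^ (-lam) := Real.rpow_nonneg (hd m i).le _
    have h2 : (0:ℝ) ≤ (if a i = a m then (1:ℝ) else 0) := by positivity
    have h3 := (hP m).le
    exact mul_nonneg (mul_nonneg h3 h1) h2

/-- Validity of the group-partitioned spectrum access utility system: with users
partitioned into disjoint groups `G 1, …, G l` and group utilities
`η i = ∑_{j ∈ G i} α j`, every group's utility is at least its marginal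
contribution to the social utility, and the group utilities sum exactly to the
social utility. -/
theorem spectrum_group_system_valid (N : ℕ) (P : Fin N → ℝ) (d : Fin N → Fin N → ℝ)
    (lam : ℝ) (Np : Fin N → Finset (Fin N)) (ω : Fin N → ℕ → ℝ) (a : Fin N → ℕ)
    (hP : ∀ m, 0 < P m) (hd : ∀ m i, 0 < d m i) (hlam : 0 < lam)
    (hω : ∀ i c, 0 ≤ ω i c) (hNp : ∀ i, i ∉ Np i)
    (l : ℕ) (G : Fin l → Finset (Fin N))
    (hGdisj : ∀ i j : Fin l, i ≠ j → Disjoint (G i) (G j))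
    (hGcover : Finset.univ.biUnion G = (Finset.univ : Finset (Fin N))) :
    (∀ i : Fin l,
      socialUtility N P d lam Np ω a Finset.univ
        - socialUtility N P d lam Np ω a (Finset.univ \ G i)
      ≤ ∑ j ∈ G i, privateUtility N P d lam Np ω a Finset.univ j) ∧
    (∑ i : Fin l, ∑ j ∈ G i, privateUtility N P d lam Np ω a Finset.univ j
      = socialUtility N P d lam Np ω a Finset.univ) := by
  constructor
  · intro i
    have hsplit : socialUtility N P d lam Np ω a Finset.univ
        = (∑ j ∈ G i, privateUtility N P d lam Np ω a Finset.univ j)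
          + ∑ j ∈ Finset.univ \ G i, privateUtility N P d lam Np ω a Finset.univ j := by
      rw [socialUtility, ← Finset.sum_sdiff (Finset.subset_univ (G i))]
      ring
    rw [hsplit]
    have hle : ∀ j ∈ Finset.univ \ G i,
        privateUtility N P d lam Np ω a Finset.univ j
        ≤ privateUtility N P d lam Np ω a (Finset.univ \ G i) j := by
      intro j _
      unfold privateUtility
      have := interference_mono N P d lam Np a hP hd
        (Finset.sdiff_subset (s := (Finset.univ : Finset (Fin N))) (t := G i)) j
      linarith
    have := Finset.sum_le_sum hle
    unfold socialUtility
    linarith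
  · rw [socialUtility, ← hGcover]
    exact (Finset.sum_biUnion (fun x _ y _ hxy => hGdisj x y hxy)).symm
end

section
/- In the spectrum access game, if all users have equal transmit power P and social ties are symmetric (w_{mn} = w_{nm}), and if for every user i and assignment A, Σ_{n ∈ N_i^s} w_{in} α_n(A) ≥ (min_{1≤j≤N} Σ_{m ∈ N_j^s} w_{jm}) α_i(A) - p Σ_{m ∈ N_i^p} P d_{mi}^{-λ} 1{a_i = a_m}, where p = min_j (1 + Σ_{m ∈ N_j^s} w_{jm}), then the social-group utility η_i(A) = α_i(A) + Σ_{n ∈ N_i^s} w_{in} α_n(A) satisfies η_i(A) ≥ γ(A) - γ(A_{-i}) with γ(A) = p Σ_{i=1}^N α_i(A). -/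
open Finset

/-- In the spectrum access game with equal transmit power `P` and symmetric
social ties, if for every user `i` and assignment `A`,
`∑_{n ∈ N_i^s} w i n * α n A ≥ (min_j ∑_{m ∈ N_j^s} w j m) * α i A
  - p * ∑_{m ∈ N_i^p} P * d m i ^ (-λ) * 1{a i = a m}`
where `p = min_j (1 + ∑_{m ∈ N_j^s} w j m)`, then the social-group utility
`η i A = α i A + ∑_{n ∈ N_i^s} w i n * α n A` satisfies
`η i A ≥ γ A - γ (A_{-i})` with `γ A = p * ∑ i, α i A`. -/
theorem spectrum_social_aware_assumption (N : ℕ) (P : ℝ) (d : Fin N → Fin N → ℝ)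
    (lam : ℝ) (Np : Fin N → Finset (Fin N)) (ω : Fin N → ℕ → ℝ)
    (w : Fin N → Fin N → ℝ) (Ns : Fin N → Finset (Fin N))
    (hP : 0 < P) (hd : ∀ m i, 0 < d m i) (hlam : 0 < lam)
    (hω : ∀ i c, 0 ≤ ω i c) (hNp : ∀ i, i ∉ Np i)
    (hdsymm : ∀ m i, d m i = d i m)
    (hNpsymm : ∀ m i : Fin N, m ∈ Np i ↔ i ∈ Np m)
    (hw01 : ∀ i n, 0 ≤ w i n ∧ w i n ≤ 1)
    (hwsymm : ∀ m n, w m n = w n m)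
    -- q = min_j ∑_{m ∈ N_j^s} w j m, and p = 1 + q
    (q : ℝ) (hq : IsLeast {x : ℝ | ∃ j : Fin N, x = ∑ m ∈ Ns j, w j m} q)
    (p : ℝ) (hp : p = 1 + q)
    -- the key hypothesis, for every user i and assignment a
    (hkey : ∀ (a : Fin N → ℕ) (i : Fin N),
      q * privateUtility N (fun _ => P) d lam Np ω a Finset.univ i
        - p * ∑ m ∈ Np i, P * d m i ^ (-lam) * (if a i = a m then 1 else 0)
      ≤ ∑ n ∈ Ns i, w i n * privateUtility N (fun _ => P) d lam Np ω a Finset.univ n) :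
    ∀ (a : Fin N → ℕ) (i : Fin N),
      p * socialUtility N (fun _ => P) d lam Np ω a Finset.univ
        - p * socialUtility N (fun _ => P) d lam Np ω a (Finset.univ \ {i})
      ≤ privateUtility N (fun _ => P) d lam Np ω a Finset.univ i
        + ∑ n ∈ Ns i, w i n * privateUtility N (fun _ => P) d lam Np ω a Finset.univ n := by
  intro a i
  have hkey' := hkey a i
  set I : ℝ := ∑ m ∈ Np i, P * d m i ^ (-lam) * (if a i = a m then 1 else 0) with hIdef
  -- difference of interference for each user j
  have hI : ∀ j : Fin N,
      interference N (fun _ => P) d lam Np a Finset.univ j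
        - interference N (fun _ => P) d lam Np a (Finset.univ \ {i}) j
      = if i ∈ Np j then P * d i j ^ (-lam) * (if a j = a i then 1 else 0) else 0 := by
    intro j
    unfold interference
    have h1 : Np j ∩ Finset.univ = Np j := Finset.inter_univ _
    have h2 : Np j ∩ (Finset.univ \ {i}) = Np j \ {i} := by
      ext m
      simp [Finset.mem_inter, Finset.mem_sdiff]
    rw [h1, h2]
    by_cases hij : i ∈ Np j
    · rw [if_pos hij,
        Finset.sum_eq_sum_sdiff_singleton_add hij
          (fun m => P * d m j ^ (-lam) * (if a j = a m then 1 else 0))]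
      ring
    · rw [if_neg hij, Finset.sdiff_singleton_eq_erase, Finset.erase_eq_of_notMem hij]; ring
  -- key identity on social utilities
  have hdiff : socialUtility N (fun _ => P) d lam Np ω a Finset.univ
      - socialUtility N (fun _ => P) d lam Np ω a (Finset.univ \ {i})
      = privateUtility N (fun _ => P) d lam Np ω a Finset.univ i - I := by
    unfold socialUtility
    have hiu : i ∈ (Finset.univ : Finset (Fin N)) := Finset.mem_univ i
    rw [Finset.sum_eq_sum_sdiff_singleton_add hiu
      (fun j => privateUtility N (fun _ => P) d lam Np ω a Finset.univ j)]
    have hsum : ∑ j ∈ Finset.univ \ {i},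
        (privateUtility N (fun _ => P) d lam Np ω a Finset.univ j
          - privateUtility N (fun _ => P) d lam Np ω a (Finset.univ \ {i}) j) = -I := by
      have hterm : ∀ j ∈ Finset.univ \ {i},
          privateUtility N (fun _ => P) d lam Np ω a Finset.univ j
            - privateUtility N (fun _ => P) d lam Np ω a (Finset.univ \ {i}) j
          = -(if i ∈ Np j then P * d i j ^ (-lam) * (if a j = a i then 1 else 0) else 0) := by
        intro j _
        unfold privateUtility
        rw [← hI j]
        ring
      rw [Finset.sum_congr rfl hterm, Finset.sum_neg_distrib, neg_inj,
        ← Finset.sum_filter]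
      have hfilt : (Finset.univ \ {i}).filter (fun j => i ∈ Np j) = Np i := by
        ext j
        simp only [Finset.mem_filter, Finset.mem_sdiff, Finset.mem_univ, true_and,
          Finset.mem_singleton]
        constructor
        · rintro ⟨_, hj⟩
          exact (hNpsymm j i).mpr hj
        · intro hj
          refine ⟨fun hji => ?_, (hNpsymm j i).mp hj⟩
          exact hNp i (hji ▸ hj)
      rw [hfilt, hIdef]
      apply Finset.sum_congr rfl
      intro m _
      rw [hdsymm m i]
      congr 1
      simp [eq_comm]
    rw [Finset.sum_sub_distrib] at hsum
    linarith [hsum]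
  have h4 : p * privateUtility N (fun _ => P) d lam Np ω a Finset.univ i
      = privateUtility N (fun _ => P) d lam Np ω a Finset.univ i
        + q * privateUtility N (fun _ => P) d lam Np ω a Finset.univ i := by
    rw [hp]; ring
  have h3 : p * socialUtility N (fun _ => P) d lam Np ω a Finset.univ
      - p * socialUtility N (fun _ => P) d lam Np ω a (Finset.univ \ {i})
      = p * privateUtility N (fun _ => P) d lam Np ω a Finset.univ i - p * I := by
    rw [← mul_sub, hdiff]; ring
  linarith [h3, h4, hkey']
end

section
/- (Vetta's 1/(1+c) bound, pure-strategy single-user version.) For a valid utility system (γ, {α_i}_{i=1}^N) with γ nondecreasing, submodular, γ(∅)=0, any (pure) Nash equilibrium X = (x_1,…,x_N) satisfies γ(X) ≥ γ(Ω)/(1+c), where c is the curvature of γ. -/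
open Finset

/-- Vetta's `1/(1+c)` bound, pure-strategy single-user version: for a valid
utility system `(γ, {α i})` with `γ` nondecreasing, submodular and `γ ∅ = 0`,
any pure Nash equilibrium `x` satisfies `γ X ≥ γ Ω / (1 + c)`, where `c` is the
curvature of `γ`. -/
theorem nash_curvature_bound {V : Type*} [DecidableEq V]
    (γ : Finset V → ℝ)
    (hsub : ∀ A B : Finset V, γ (A ∪ B) + γ (A ∩ B) ≤ γ A + γ B)
    (hmono : ∀ A B : Finset V, A ⊆ B → γ A ≤ γ B)
    (h0 : γ ∅ = 0)
    (N : ℕ) (𝒳 : Fin N → Set (Finset V))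
    -- actions of distinct users come from disjoint ground sets
    (hdisj : ∀ i j : Fin N, i ≠ j → ∀ x ∈ 𝒳 i, ∀ y ∈ 𝒳 j, Disjoint x y)
    (α : Fin N → (Fin N → Finset V) → ℝ)
    -- validity
    (hvalid1 : ∀ t : Fin N → Finset V, (∀ i, t i ∈ 𝒳 i) → ∀ i : Fin N,
      γ (Finset.univ.biUnion t) - γ (Finset.univ.biUnion t \ t i) ≤ α i t)
    (hvalid2 : ∀ t : Fin N → Finset V, (∀ i, t i ∈ 𝒳 i) →
      ∑ i : Fin N, α i t ≤ γ (Finset.univ.biUnion t))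
    (x σ : Fin N → Finset V)
    (hx : ∀ i, x i ∈ 𝒳 i) (hσ : ∀ i, σ i ∈ 𝒳 i)
    -- Ω = ∪ σ i maximizes γ over feasible action profiles
    (hopt : ∀ t : Fin N → Finset V, (∀ i, t i ∈ 𝒳 i) →
      γ (Finset.univ.biUnion t) ≤ γ (Finset.univ.biUnion σ))
    -- x is a pure Nash equilibrium
    (hnash : ∀ i : Fin N, ∀ x' ∈ 𝒳 i, α i (Function.update x i x') ≤ α i x)
    -- c is the curvature of γ
    (c : ℝ)
    (hc : IsGreatest {r : ℝ | ∃ (i : Fin N) (t : Fin N → Finset V),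
      (∀ j, t j ∈ 𝒳 j) ∧ γ (t i) ≠ 0 ∧
      r = 1 - (γ (Finset.univ.biUnion σ ∪ Finset.univ.biUnion t)
        - γ (Finset.univ.biUnion σ ∪ (Finset.univ.biUnion t \ t i))) / γ (t i)} c) :
    γ (Finset.univ.biUnion σ) / (1 + c) ≤ γ (Finset.univ.biUnion x) := by
  classical
  set X := Finset.univ.biUnion x with hX
  set Ω := Finset.univ.biUnion σ with hΩ
  -- nonnegativity of γ
  have hpos : ∀ A : Finset V, 0 ≤ γ A := fun A => h0 ▸ hmono ∅ A (Finset.empty_subset A)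
  -- submodularity as decreasing marginals
  have marg : ∀ A B s : Finset V, A ⊆ B → γ (B ∪ s) - γ B ≤ γ (A ∪ s) - γ A := by
    intro A B s hAB
    have h1 := hsub (A ∪ s) B
    have h2 : (A ∪ s) ∪ B = B ∪ s := by
      rw [Finset.union_right_comm, Finset.union_eq_right.mpr hAB]
    have h3 : γ A ≤ γ ((A ∪ s) ∩ B) :=
      hmono _ _ (Finset.subset_inter Finset.subset_union_left hAB)
    rw [h2] at h1
    linarith
  have hxX : ∀ i, x i ⊆ X := by
    intro i; rw [hX]; exact Finset.subset_biUnion_of_mem x (Finset.mem_univ i)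
  have subX : ∀ i j : Fin N, j ≠ i → x j ⊆ X \ x i := by
    intro i j hji a ha
    rw [Finset.mem_sdiff]
    exact ⟨hxX j ha, fun h => Finset.disjoint_left.mp (hdisj j i hji _ (hx j) _ (hx i)) ha h⟩
  -- telescoping
  have hfilN : ∀ f : Fin N → Finset V,
      (Finset.univ.filter fun j : Fin N => (j : ℕ) < N) = Finset.univ :=
    fun _ => Finset.filter_true_of_mem (fun j _ => j.isLt)
  have tele : ∀ (B : Finset V) (f : Fin N → Finset V),
      γ (B ∪ Finset.univ.biUnion f) - γ B
        = ∑ i : Fin N,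
            (γ (B ∪ (Finset.univ.filter fun j : Fin N => (j : ℕ) < (i : ℕ) + 1).biUnion f)
              - γ (B ∪ (Finset.univ.filter fun j : Fin N => (j : ℕ) < (i : ℕ)).biUnion f)) := by
    intro B f
    rw [Fin.sum_univ_eq_sum_range
      (fun k => γ (B ∪ (Finset.univ.filter fun j : Fin N => (j : ℕ) < k + 1).biUnion f)
        - γ (B ∪ (Finset.univ.filter fun j : Fin N => (j : ℕ) < k).biUnion f)) N]
    rw [Finset.sum_range_sub
      (fun k => γ (B ∪ (Finset.univ.filter fun j : Fin N => (j : ℕ) < k).biUnion f))]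
    have h0' : (Finset.univ.filter fun j : Fin N => (j : ℕ) < 0) = (∅ : Finset (Fin N)) :=
      Finset.filter_false_of_mem (fun j _ => Nat.not_lt_zero _)
    rw [hfilN f, h0', Finset.biUnion_empty, Finset.union_empty]
  have step : ∀ (f : Fin N → Finset V) (i : Fin N),
      (Finset.univ.filter fun j : Fin N => (j : ℕ) < (i : ℕ) + 1).biUnion f
        = (Finset.univ.filter fun j : Fin N => (j : ℕ) < (i : ℕ)).biUnion f ∪ f i := by
    intro f i
    ext a
    simp only [Finset.mem_biUnion, Finset.mem_filter, Finset.mem_union, Finset.mem_univ,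
      true_and]
    constructor
    · rintro ⟨j, hj, ha⟩
      rcases Nat.lt_succ_iff_lt_or_eq.mp hj with h | h
      · exact Or.inl ⟨j, h, ha⟩
      · exact Or.inr (by rwa [show j = i from Fin.ext h] at ha)
    · rintro (⟨j, hj, ha⟩ | ha)
      · exact ⟨j, Nat.lt_succ_of_lt hj, ha⟩
      · exact ⟨i, Nat.lt_succ_self _, ha⟩
  -- the Nash-equilibrium bound on the marginal of σ i over X \ x i
  have key1 : ∀ i : Fin N, γ ((X \ x i) ∪ σ i) - γ (X \ x i) ≤ α i x := by
    intro i
    set t := Function.update x i (σ i) with htdef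
    have ht : ∀ j, t j ∈ 𝒳 j := by
      intro j
      by_cases hji : j = i
      · subst hji; rw [htdef, Function.update_self]; exact hσ j
      · rw [htdef, Function.update_of_ne hji]; exact hx j
    have hT : Finset.univ.biUnion t = (X \ x i) ∪ σ i := by
      ext a
      simp only [Finset.mem_biUnion, Finset.mem_union, Finset.mem_sdiff, Finset.mem_univ,
        true_and]
      constructor
      · rintro ⟨j, hj⟩
        by_cases hji : j = i
        · subst hji; rw [htdef, Function.update_self] at hj; exact Or.inr hj
        · rw [htdef, Function.update_of_ne hji] at hj
          exact Or.inl ⟨hxX j hj,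
            fun h => Finset.disjoint_left.mp (hdisj j i hji _ (hx j) _ (hx i)) hj h⟩
      · rintro (⟨haX, hni⟩ | h)
        · rw [hX] at haX
          obtain ⟨j, _, hj⟩ := Finset.mem_biUnion.mp haX
          have hji : j ≠ i := fun e => hni (e ▸ hj)
          exact ⟨j, by rw [htdef, Function.update_of_ne hji]; exact hj⟩
        · exact ⟨i, by rw [htdef, Function.update_self]; exact h⟩
    have hd : Disjoint (X \ x i) (σ i) := by
      rw [Finset.disjoint_left]
      intro a ha hσa
      rw [Finset.mem_sdiff, hX] at ha
      obtain ⟨j, _, hj⟩ := Finset.mem_biUnion.mp ha.1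
      have hji : j ≠ i := fun e => ha.2 (e ▸ hj)
      exact Finset.disjoint_left.mp (hdisj i j (Ne.symm hji) _ (hσ i) _ (hx j)) hσa hj
    have hTi : Finset.univ.biUnion t \ t i = X \ x i := by
      rw [hT, htdef, Function.update_self, Finset.union_sdiff_right,
        Finset.sdiff_eq_self_of_disjoint hd]
    have hv := hvalid1 t ht i
    rw [hTi] at hv
    rw [hT] at hv
    have hn := hnash i (σ i) (hσ i)
    rw [← htdef] at hn
    linarith
  -- curvature is in [0, 1]
  obtain ⟨⟨i0, t0, ht0, hne0, hc0⟩, hub⟩ := hc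
  have hc01 : 0 ≤ c ∧ c ≤ 1 := by
    have hti0 : t0 i0 ⊆ Finset.univ.biUnion t0 :=
      Finset.subset_biUnion_of_mem t0 (Finset.mem_univ i0)
    have hpos0 : 0 < γ (t0 i0) := lt_of_le_of_ne (hpos _) (Ne.symm hne0)
    have hm0 : 0 ≤ γ (Ω ∪ Finset.univ.biUnion t0) - γ (Ω ∪ (Finset.univ.biUnion t0 \ t0 i0)) := by
      linarith [hmono (Ω ∪ (Finset.univ.biUnion t0 \ t0 i0)) (Ω ∪ Finset.univ.biUnion t0)
        (Finset.union_subset_union_right Finset.sdiff_subset)]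
    have hm1 : γ (Ω ∪ Finset.univ.biUnion t0) - γ (Ω ∪ (Finset.univ.biUnion t0 \ t0 i0))
        ≤ γ (t0 i0) := by
      have h1 := marg ∅ (Ω ∪ (Finset.univ.biUnion t0 \ t0 i0)) (t0 i0) (Finset.empty_subset _)
      rw [Finset.empty_union, h0, Finset.union_assoc,
        Finset.sdiff_union_of_subset hti0] at h1
      linarith
    constructor
    · rw [hc0]
      have : (γ (Ω ∪ Finset.univ.biUnion t0)
          - γ (Ω ∪ (Finset.univ.biUnion t0 \ t0 i0))) / γ (t0 i0) ≤ 1 :=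
        (div_le_one hpos0).mpr hm1
      linarith
    · rw [hc0]
      have : 0 ≤ (γ (Ω ∪ Finset.univ.biUnion t0)
          - γ (Ω ∪ (Finset.univ.biUnion t0 \ t0 i0))) / γ (t0 i0) :=
        div_nonneg hm0 (le_of_lt hpos0)
      linarith
  -- the curvature bound on marginals of x i over Ω ∪ (X \ x i)
  have key2 : ∀ i : Fin N, (1 - c) * γ (x i) ≤ γ (Ω ∪ X) - γ (Ω ∪ (X \ x i)) := by
    intro i
    by_cases hγ : γ (x i) = 0
    · rw [hγ, mul_zero]
      linarith [hmono (Ω ∪ (X \ x i)) (Ω ∪ X)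
        (Finset.union_subset_union_right Finset.sdiff_subset)]
    · have hmem : (1 - (γ (Ω ∪ X) - γ (Ω ∪ (X \ x i))) / γ (x i)) ∈
          {r : ℝ | ∃ (i : Fin N) (t : Fin N → Finset V),
            (∀ j, t j ∈ 𝒳 j) ∧ γ (t i) ≠ 0 ∧
            r = 1 - (γ (Ω ∪ Finset.univ.biUnion t)
              - γ (Ω ∪ (Finset.univ.biUnion t \ t i))) / γ (t i)} := by
        exact ⟨i, x, hx, hγ, by rw [← hX]⟩
      have hle := hub hmem
      have hpx : 0 < γ (x i) := lt_of_le_of_ne (hpos _) (Ne.symm hγ)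
      have h1 : 1 - c ≤ (γ (Ω ∪ X) - γ (Ω ∪ (X \ x i))) / γ (x i) := by linarith
      calc (1 - c) * γ (x i) ≤ (γ (Ω ∪ X) - γ (Ω ∪ (X \ x i))) / γ (x i) * γ (x i) :=
            mul_le_mul_of_nonneg_right h1 (hpos _)
        _ = γ (Ω ∪ X) - γ (Ω ∪ (X \ x i)) := div_mul_cancel₀ _ hγ
  -- main inequalities
  have S1 : γ (X ∪ Ω) - γ X ≤ ∑ i : Fin N, α i x := by
    rw [hΩ, tele X σ]
    refine Finset.sum_le_sum fun i _ => ?_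
    rw [step σ i, ← Finset.union_assoc]
    exact le_trans
      (marg (X \ x i) (X ∪ (Finset.univ.filter fun j : Fin N => (j : ℕ) < (i : ℕ)).biUnion σ)
        (σ i) (Finset.sdiff_subset.trans Finset.subset_union_left))
      (key1 i)
  have S1' : ∑ i : Fin N, α i x ≤ γ X := hvalid2 x hx
  have S2 : ∑ i : Fin N, (1 - c) * γ (x i) ≤ γ (Ω ∪ X) - γ Ω := by
    rw [hX, tele Ω x]
    refine Finset.sum_le_sum fun i _ => ?_
    rw [step x i, ← Finset.union_assoc]
    have hsubst : Ω ∪ (Finset.univ.filter fun j : Fin N => (j : ℕ) < (i : ℕ)).biUnion x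
        ⊆ Ω ∪ (X \ x i) := by
      refine Finset.union_subset_union_right ?_
      refine Finset.biUnion_subset.mpr fun j hj => ?_
      rw [Finset.mem_filter] at hj
      exact subX i j (by rintro rfl; exact lt_irrefl _ hj.2)
    have hm := marg _ _ (x i) hsubst
    have e1 : Ω ∪ (X \ x i) ∪ x i = Ω ∪ X := by
      rw [Finset.union_assoc, Finset.sdiff_union_of_subset (hxX i)]
    rw [e1] at hm
    exact le_trans (key2 i) hm
  have S3 : γ X ≤ ∑ i : Fin N, γ (x i) := by
    have h := tele ∅ x
    rw [Finset.empty_union, ← hX, h0, sub_zero] at h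
    rw [h]
    refine Finset.sum_le_sum fun i _ => ?_
    rw [step x i]
    simp only [Finset.empty_union]
    have hm := marg ∅ ((Finset.univ.filter fun j : Fin N => (j : ℕ) < (i : ℕ)).biUnion x)
      (x i) (Finset.empty_subset _)
    rw [Finset.empty_union, h0, sub_zero] at hm
    exact hm
  have hcomm : γ (X ∪ Ω) = γ (Ω ∪ X) := by rw [Finset.union_comm]
  have hmul : (1 - c) * γ X ≤ (1 - c) * ∑ i : Fin N, γ (x i) :=
    mul_le_mul_of_nonneg_left S3 (by linarith [hc01.2])
  rw [← Finset.mul_sum] at S2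
  have hfin : γ Ω ≤ (1 + c) * γ X := by nlinarith
  rw [div_le_iff₀ (by linarith [hc01.1] : (0 : ℝ) < 1 + c)]
  nlinarith
end
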